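/- Let g be a nondegenerate symmetric bilinear form on ℝ^m admitting a vector x₀ with g(x₀,x₀) > 0, let B : ℝ^m × ℝ^m → M_m(ℝ) be a symmetric bilinear map, and set J(x) := B(x,x). Suppose there is a fixed multiset M⁺ of complex numbers such that for every u with g(u,u) = 1 the complex root multiset of J(u) equals M⁺ (i.e., the structure is spacelike Osserman at the point). Then for every x ∈ ℝ^m the complex root multiset of J(x) equals the multiset obtained from M⁺ by multiplying each element by g(x,x). (Theorem 2.1: an Osserman pseudo-Riemannian manifold is projectively Osserman, in pointwise algebraic form.) -/

import Mathlib

open Polynomial Matrix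

private lemma coeff_comp_C_mul_X {R : Type*} [CommRing R] (p : R[X]) (b : R) (k : ℕ) :
    (p.comp (C b * X)).coeff k = p.coeff k * b ^ k := by
  induction p using Polynomial.induction_on' with
  | add p q hp hq => simp [add_comp, hp, hq, add_mul]
  | monomial n a =>
      rw [monomial_comp]
      simp only [mul_pow, ← C_pow, ← mul_assoc, ← C_mul, coeff_C_mul, coeff_X_pow,
        coeff_monomial]
      by_cases hnk : n = k
      · subst hnk; simp
      · simp [hnk, Ne.symm hnk]

private lemma charpoly_smul_comp (m : ℕ) (A : Matrix (Fin m) (Fin m) ℝ) (c : ℝ) :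
    ((c • A).charpoly).comp (C c * X) = C (c ^ m) * A.charpoly := by
  have hσ : (charmatrix (c • A)).map (eval₂RingHom C (C c * X) : ℝ[X] →+* ℝ[X])
      = (C c) • charmatrix A := by
    ext i j
    by_cases hij : i = j
    · subst hij
      simp only [Matrix.map_apply, charmatrix_apply_eq, coe_eval₂RingHom, eval₂_sub,
        eval₂_X, eval₂_C, Matrix.smul_apply, smul_eq_mul]
      rw [mul_sub, ← C_mul]
    · simp only [Matrix.map_apply, charmatrix_apply_ne _ _ _ hij, coe_eval₂RingHom,
        eval₂_neg, eval₂_C, Matrix.smul_apply, smul_eq_mul]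
      rw [mul_neg, ← C_mul]
  have h1 : ((c • A).charpoly).comp (C c * X)
      = (eval₂RingHom C (C c * X) : ℝ[X] →+* ℝ[X]) ((charmatrix (c • A)).det) := by
    rfl
  rw [h1, RingHom.map_det, RingHom.mapMatrix_apply, hσ, Matrix.det_smul,
    Fintype.card_fin, ← C_pow]
  rfl

private lemma coeff_charpoly_smul (m : ℕ) (A : Matrix (Fin m) (Fin m) ℝ) (c : ℝ) (k : ℕ)
    (hc : c ≠ 0) (hk : k ≤ m) :
    ((c • A).charpoly).coeff k = c ^ (m - k) * A.charpoly.coeff k := by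
  have h := congrArg (fun p => Polynomial.coeff p k) (charpoly_smul_comp m A c)
  simp only [coeff_comp_C_mul_X, coeff_C_mul] at h
  have hpow : c ^ m = c ^ (m - k) * c ^ k := by rw [← pow_add, Nat.sub_add_cancel hk]
  apply mul_right_cancel₀ (pow_ne_zero k hc)
  rw [h, hpow]; ring

/-- Theorem 2.1 of the paper, in pointwise algebraic form: if the complex root
multiset of the Jacobi operator J(u) is a fixed multiset M⁺ for all unit
spacelike u (spacelike Osserman), then the root multiset of J(x) is g(x,x)·M⁺
for every tangent vector x (projectively Osserman). -/
theorem osserman_implies_projectively_osserman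
    (m : ℕ) (g : LinearMap.BilinForm ℝ (Fin m → ℝ))
    (hgsym : ∀ x y, g x y = g y x)
    (hgnd : ∀ x : Fin m → ℝ, (∀ y, g x y = 0) → x = 0)
    (x₀ : Fin m → ℝ) (hx₀ : 0 < g x₀ x₀)
    (B : (Fin m → ℝ) →ₗ[ℝ] (Fin m → ℝ) →ₗ[ℝ] Matrix (Fin m) (Fin m) ℝ)
    (hBsym : ∀ x y, B x y = B y x)
    (Mplus : Multiset ℂ)
    (h : ∀ u : Fin m → ℝ, g u u = 1 →
      (Polynomial.map (algebraMap ℝ ℂ) (Matrix.charpoly (B u u))).roots = Mplus) :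
    ∀ x : Fin m → ℝ,
      (Polynomial.map (algebraMap ℝ ℂ) (Matrix.charpoly (B x x))).roots =
        Mplus.map (fun s => ((g x x : ℝ) : ℂ) * s) := by
  -- normalization of spacelike vectors
  have hunit : ∀ y : Fin m → ℝ, 0 < g y y →
      g ((Real.sqrt (g y y))⁻¹ • y) ((Real.sqrt (g y y))⁻¹ • y) = 1 := by
    intro y hy
    have ht : Real.sqrt (g y y) ≠ 0 := ne_of_gt (Real.sqrt_pos.2 hy)
    have htt : Real.sqrt (g y y) * Real.sqrt (g y y) = g y y := Real.mul_self_sqrt hy.le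
    simp only [_root_.map_smul, LinearMap.smul_apply, smul_eq_mul]
    have hre : (Real.sqrt (g y y))⁻¹ * ((Real.sqrt (g y y))⁻¹ * g y y)
        = g y y / (Real.sqrt (g y y) * Real.sqrt (g y y)) := by ring
    rw [hre, htt, div_self (ne_of_gt hy)]
  set u₀ : Fin m → ℝ := (Real.sqrt (g x₀ x₀))⁻¹ • x₀ with hu₀def
  have hu₀ : g u₀ u₀ = 1 := hunit x₀ hx₀
  set p₀ : ℝ[X] := (B u₀ u₀).charpoly with hp₀def
  have hmon : p₀.Monic := Matrix.charpoly_monic _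
  have hdeg : p₀.natDegree = m := by
    rw [hp₀def, Matrix.charpoly_natDegree_eq_dim, Fintype.card_fin]
  set q : ℂ[X] := p₀.map (algebraMap ℝ ℂ) with hqdef
  have hq : q.roots = Mplus := h u₀ hu₀
  have hqmon : q.Monic := hmon.map _
  have hqdeg : q.natDegree = m := by rw [hqdef, hmon.natDegree_map, hdeg]
  have hcard : Multiset.card Mplus = m := by
    rw [← hq, splits_iff_card_roots.1 (IsAlgClosed.splits q), hqdeg]
  have hqprod : q = (Mplus.map fun s => X - C s).prod := by
    have := (IsAlgClosed.splits q).eq_prod_roots_of_monic hqmon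
    rwa [hq] at this
  -- the characteristic polynomial is the same for every unit spacelike vector
  have hcp : ∀ u : Fin m → ℝ, g u u = 1 → (B u u).charpoly = p₀ := by
    intro u hu
    apply map_injective (algebraMap ℝ ℂ) (algebraMap ℝ ℂ).injective
    have h1 := (IsAlgClosed.splits ((B u u).charpoly.map (algebraMap ℝ ℂ))).eq_prod_roots_of_monic
      ((Matrix.charpoly_monic (B u u)).map (algebraMap ℝ ℂ))
    rw [h u hu] at h1
    rw [h1, ← hqdef, hqprod]
  -- Claim A: scaling to spacelike vectors
  have hA : ∀ y : Fin m → ℝ, 0 < g y y → ∀ k : ℕ,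
      (B y y).charpoly.coeff k = p₀.coeff k * (g y y) ^ (m - k) := by
    intro y hy k
    by_cases hk : k ≤ m
    · set t : ℝ := Real.sqrt (g y y) with htdef
      have ht : t ≠ 0 := ne_of_gt (Real.sqrt_pos.2 hy)
      have htt : t * t = g y y := Real.mul_self_sqrt hy.le
      set u : Fin m → ℝ := t⁻¹ • y with hudef
      have hu : g u u = 1 := hunit y hy
      have hyu : B y y = (g y y) • B u u := by
        have hy' : y = t • u := by
          rw [hudef, smul_smul, mul_inv_cancel₀ ht, one_smul]
        conv_lhs => rw [hy']
        simp only [_root_.map_smul, LinearMap.smul_apply, smul_smul]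
        rw [htt]
      rw [hyu, coeff_charpoly_smul m _ _ k (ne_of_gt hy) hk, hcp u hu]; ring
    · push_neg at hk
      have h1 : (B y y).charpoly.coeff k = 0 := by
        apply coeff_eq_zero_of_natDegree_lt
        rw [Matrix.charpoly_natDegree_eq_dim, Fintype.card_fin]; exact hk
      have h2 : p₀.coeff k = 0 := by
        apply coeff_eq_zero_of_natDegree_lt; rw [hdeg]; exact hk
      rw [h1, h2, zero_mul]
  -- Claim B: the coefficient identity for all vectors, by polynomial continuation
  have hB : ∀ (x : Fin m → ℝ) (k : ℕ),
      (B x x).charpoly.coeff k = p₀.coeff k * (g x x) ^ (m - k) := by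
    intro x k
    set y : ℝ → (Fin m → ℝ) := fun t => x + t • x₀ with hydef
    have hBy : ∀ t : ℝ, B (y t) (y t)
        = B x x + t • B x x₀ + t • B x x₀ + (t * t) • B x₀ x₀ := by
      intro t
      simp only [hydef, map_add, _root_.map_smul, LinearMap.add_apply,
        LinearMap.smul_apply, hBsym x₀ x, smul_add, smul_smul]
      abel
    have hgy : ∀ t : ℝ, g (y t) (y t)
        = g x x + t * g x x₀ + t * g x x₀ + (t * t) * g x₀ x₀ := by
      intro t
      simp only [hydef, map_add, _root_.map_smul, LinearMap.add_apply,
        LinearMap.smul_apply, hgsym x₀ x, smul_eq_mul, mul_add]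
      ring
    set N : Matrix (Fin m) (Fin m) ℝ[X] :=
      (B x x).map C + (X : ℝ[X]) • (B x x₀).map C + (X : ℝ[X]) • (B x x₀).map C
        + ((X : ℝ[X]) * X) • (B x₀ x₀).map C with hNdef
    have hN : ∀ t : ℝ, N.map (evalRingHom t) = B (y t) (y t) := by
      intro t
      rw [hBy t]
      ext i j
      simp [hNdef, Matrix.map_apply, Matrix.add_apply, Matrix.smul_apply, smul_eq_mul]
      ring
    have hPt : ∀ t : ℝ, (B (y t) (y t)).charpoly = N.charpoly.map (evalRingHom t) := by
      intro t
      rw [← hN t, Matrix.charpoly_map]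
    set G : ℝ[X] := C (g x x) + C (g x x₀) * X + C (g x x₀) * X
        + C (g x₀ x₀) * (X * X) with hGdef
    have hG : ∀ t : ℝ, G.eval t = g (y t) (y t) := by
      intro t; rw [hgy t]
      simp only [hGdef, eval_add, eval_mul, eval_C, eval_X]
      ring
    -- the two polynomials in t agree on an infinite set
    set T : ℝ := max 1 ((|g x x₀| + |g x x₀| + |g x x|) / (g x₀ x₀) + 1) with hTdef
    have hpos : ∀ t : ℝ, T < t → 0 < g (y t) (y t) := by
      intro t ht
      have ht1 : (1 : ℝ) < t := lt_of_le_of_lt (le_max_left _ _) ht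
      have ht2 : (|g x x₀| + |g x x₀| + |g x x|) / (g x₀ x₀) + 1 < t :=
        lt_of_le_of_lt (le_max_right _ _) ht
      have ht3 : |g x x₀| + |g x x₀| + |g x x| < g x₀ x₀ * (t - 1) := by
        rw [div_add' _ _ _ (ne_of_gt hx₀)] at ht2
        calc |g x x₀| + |g x x₀| + |g x x|
            ≤ |g x x₀| + |g x x₀| + |g x x| + g x₀ x₀ * 0 := by simp
          _ < g x₀ x₀ * (t - 1) := by
              nlinarith [(div_lt_iff₀ hx₀).1 ht2]
      rw [hgy t]
      nlinarith [neg_abs_le (g x x), neg_abs_le (g x x₀), abs_nonneg (g x x₀),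
        abs_nonneg (g x x), mul_pos (lt_trans one_pos ht1) (lt_trans one_pos ht1)]
    have hPQ : N.charpoly.coeff k = C (p₀.coeff k) * G ^ (m - k) := by
      apply eq_of_infinite_eval_eq
      apply Set.Infinite.mono _ (Set.Ioi_infinite T)
      intro t ht
      have hgt : 0 < g (y t) (y t) := hpos t ht
      show (N.charpoly.coeff k).eval t = (C (p₀.coeff k) * G ^ (m - k)).eval t
      rw [eval_mul, eval_C, eval_pow, hG]
      calc (N.charpoly.coeff k).eval t
          = (N.charpoly.map (evalRingHom t)).coeff k := by rw [coeff_map]; rfl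
        _ = (B (y t) (y t)).charpoly.coeff k := by rw [← hPt t]
        _ = p₀.coeff k * (g (y t) (y t)) ^ (m - k) := hA (y t) hgt k
    have hy0 : y 0 = x := by simp [hydef]
    calc (B x x).charpoly.coeff k
        = (N.charpoly.map (evalRingHom 0)).coeff k := by rw [← hPt 0, hy0]
      _ = (N.charpoly.coeff k).eval 0 := by rw [coeff_map]; rfl
      _ = (C (p₀.coeff k) * G ^ (m - k)).eval 0 := by rw [hPQ]
      _ = p₀.coeff k * (g x x) ^ (m - k) := by
          rw [eval_mul, eval_C, eval_pow, hG 0, hy0]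
  -- conclusion
  intro x
  by_cases hc : g x x = 0
  · have hX : (B x x).charpoly = X ^ m := by
      ext k
      rw [hB x k, hc, coeff_X_pow]
      by_cases hkm : k = m
      · subst hkm
        simp only [Nat.sub_self, pow_zero, mul_one, if_pos rfl]
        have := hmon.coeff_natDegree
        rwa [hdeg] at this
      · rw [if_neg hkm]
        by_cases hk : k ≤ m
        · have : m - k ≠ 0 := Nat.sub_ne_zero_of_lt (lt_of_le_of_ne hk hkm)
          rw [zero_pow this, mul_zero]
        · push_neg at hk
          have h2 : p₀.coeff k = 0 := by
            apply coeff_eq_zero_of_natDegree_lt; rw [hdeg]; exact hk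
          rw [h2, zero_mul]
    rw [hX, Polynomial.map_pow, map_X, roots_pow, roots_X, hc]
    simp [Multiset.nsmul_singleton, hcard]
  · set c : ℂ := ((g x x : ℝ) : ℂ) with hcdef
    have hcc : c ≠ 0 := by
      simp only [hcdef, ne_eq, Complex.ofReal_eq_zero]; exact hc
    have hprod_eq : ((Mplus.map fun s => c * s).map fun a => X - C a).prod
        = C (c ^ m) * q.comp (C c⁻¹ * X) := by
      calc ((Mplus.map fun s => c * s).map fun a => X - C a).prod
          = (Mplus.map fun s => C c * (C c⁻¹ * X - C s)).prod := by
            rw [Multiset.map_map]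
            apply congrArg
            apply Multiset.map_congr rfl
            intro s _
            rw [Function.comp_apply, mul_sub, ← mul_assoc, ← C_mul,
              mul_inv_cancel₀ hcc, C_1, one_mul, ← C_mul]
        _ = (Mplus.map fun _ => C c).prod * (Mplus.map fun s => C c⁻¹ * X - C s).prod :=
            Multiset.prod_map_mul
        _ = C (c ^ m) * q.comp (C c⁻¹ * X) := by
            rw [Multiset.map_const', Multiset.prod_replicate, hcard, ← C_pow, hqprod,
              multiset_prod_comp, Multiset.map_map]
            congr 2
            apply Multiset.map_congr rfl
            intro s _
            rw [Function.comp_apply, sub_comp, X_comp, C_comp]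
    have hmap : (B x x).charpoly.map (algebraMap ℝ ℂ)
        = ((Mplus.map fun s => c * s).map fun a => X - C a).prod := by
      rw [hprod_eq]
      ext k
      rw [coeff_map, hB x k, coeff_C_mul, coeff_comp_C_mul_X]
      have hqk : q.coeff k = ((p₀.coeff k : ℝ) : ℂ) := by
        rw [hqdef, coeff_map, Complex.coe_algebraMap]
      rw [hqk, _root_.map_mul, _root_.map_pow]
      have halg : ∀ r : ℝ, (algebraMap ℝ ℂ) r = (r : ℂ) := fun r => rfl
      rw [halg, halg, ← hcdef]
      by_cases hk : k ≤ m
      · rw [pow_sub₀ c hcc hk, inv_pow]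
        ring
      · push_neg at hk
        have h2 : p₀.coeff k = 0 := by
          apply coeff_eq_zero_of_natDegree_lt; rw [hdeg]; exact hk
        rw [h2]; simp
    rw [hmap, roots_multiset_prod_X_sub_C]
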